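/- The restricted wreath product C_n ≀_{V_d} (C_d ∗ C_d) is isomorphic to a semidirect product (C_n² ≀ F_{d−1}) ⋊ C_d, where F_{d−1} is the free group of rank d−1. -/

import Mathlib

namespace WreathIso

variable (d n : ℕ)

/-- The free product `C_d ∗ C_d` of two cyclic groups of order `d`. -/
abbrev Q := Monoid.Coprod (Multiplicative (ZMod d)) (Multiplicative (ZMod d))

/-- The left free factor, as a subgroup of `C_d ∗ C_d`. -/
abbrev Lf : Subgroup (Q d) := (Monoid.Coprod.inl : Multiplicative (ZMod d) →* Q d).range

/-- The right free factor, as a subgroup of `C_d ∗ C_d`. -/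
abbrev Rf : Subgroup (Q d) := (Monoid.Coprod.inr : Multiplicative (ZMod d) →* Q d).range

/-- The vertex set of the Bass–Serre tree of `C_d ∗ C_d`: the disjoint union of the
two coset spaces of the free factors, with the natural `C_d ∗ C_d`-action. -/
abbrev Vd := (Q d ⧸ Lf d) ⊕ (Q d ⧸ Rf d)

/-- The action of `C_d ∗ C_d` on the vertices of its Bass–Serre tree, as permutations. -/
def qperm (g : Q d) : Equiv.Perm (Vd d) :=
  Equiv.sumCongr (MulAction.toPerm g) (MulAction.toPerm g)

/-- The base group `⊕_{V_d} C_n` of the wreath product `C_n ≀_{V_d} (C_d ∗ C_d)`. -/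
abbrev M1 := Multiplicative (Vd d →₀ ZMod n)

/-- The shift action of `C_d ∗ C_d` on `⊕_{V_d} C_n`. -/
noncomputable def phi1 : Q d →* MulAut (M1 d n) where
  toFun g := AddEquiv.toMultiplicative (Finsupp.domCongr (qperm d g))
  map_one' := by
    have h : qperm d 1 = 1 := by
      ext v; cases v <;> simp [qperm]
    refine MulEquiv.ext fun f => ?_
    try dsimp only
    rw [h]
    show AddEquiv.toMultiplicative (Finsupp.domCongr (Equiv.refl _)) f = f
    rw [Finsupp.domCongr_refl]
    rfl
  map_mul' a b := by
    have h : qperm d (a * b) = qperm d a * qperm d b := by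
      ext v; cases v <;> simp [qperm, mul_smul]
    refine MulEquiv.ext fun f => ?_
    try dsimp only
    rw [h]
    show AddEquiv.toMultiplicative (Finsupp.domCongr ((qperm d b).trans (qperm d a))) f = _
    rw [← Finsupp.domCongr_trans]
    rfl

/-- The restricted wreath product `C_n ≀_{V_d} (C_d ∗ C_d)`. -/
abbrev W1 := SemidirectProduct (M1 d n) (Q d) (phi1 d n)

/-- The free group of rank `d - 1`. -/
abbrev Fr := FreeGroup (Fin (d - 1))

/-- The base group `⊕_{F_{d-1}} C_n²` of the wreath product `C_n² ≀ F_{d-1}`. -/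
abbrev M2 := Multiplicative (Fr d →₀ (ZMod n × ZMod n))

/-- The translation action of `F_{d-1}` on `⊕_{F_{d-1}} C_n²`. -/
noncomputable def phi2 : Fr d →* MulAut (M2 d n) where
  toFun g := AddEquiv.toMultiplicative (Finsupp.domCongr (Equiv.mulLeft g))
  map_one' := by
    have h : (Equiv.mulLeft (1 : Fr d)) = Equiv.refl (Fr d) := by
      ext v; simp
    refine MulEquiv.ext fun f => ?_
    try dsimp only
    rw [h, Finsupp.domCongr_refl]
    rfl
  map_mul' a b := by
    have h : (Equiv.mulLeft (a * b)) = (Equiv.mulLeft b).trans (Equiv.mulLeft a) := by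
      ext v; simp [mul_assoc]
    refine MulEquiv.ext fun f => ?_
    try dsimp only
    rw [h, ← Finsupp.domCongr_trans]
    rfl

/-- The restricted wreath product `C_n² ≀ F_{d-1}`. -/
abbrev W2 := SemidirectProduct (M2 d n) (Fr d) (phi2 d n)

section SdGeneral

variable {M M' A B G H : Type*} [Group M] [Group M'] [Group A] [Group B] [Group G] [Group H]

open SemidirectProduct

/-- Change the acting group of a semidirect product along an isomorphism. -/
def sdCongrRight (φ : G →* MulAut M) (θ : G ≃* H) :
    SemidirectProduct M G φ ≃* SemidirectProduct M H (φ.comp θ.symm.toMonoidHom) where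
  toFun p := ⟨p.left, θ p.right⟩
  invFun p := ⟨p.left, θ.symm p.right⟩
  left_inv p := by ext <;> simp
  right_inv p := by ext <;> simp
  map_mul' p q := by ext <;> simp only [mul_left, mul_right] <;> simp

/-- Change the normal subgroup of a semidirect product along an equivariant isomorphism. -/
def sdCongrLeft (φ : G →* MulAut M) (φ' : G →* MulAut M') (e : M ≃* M')
    (he : ∀ g m, e (φ g m) = φ' g (e m)) :
    SemidirectProduct M G φ ≃* SemidirectProduct M' G φ' where
  toFun p := ⟨e p.left, p.right⟩
  invFun p := ⟨e.symm p.left, p.right⟩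
  left_inv p := by ext <;> simp
  right_inv p := by ext <;> simp
  map_mul' p q := by ext <;> simp [he]

variable (φ' : B →* MulAut A)

lemma sd_rho_key (ρ : SemidirectProduct A B φ' →* MulAut M) (b : B) (a : A) (x : M) :
    ρ (inr b) (ρ (inl a) x) = ρ (inl (φ' b a)) (ρ (inr b) x) := by
  rw [← MulAut.mul_apply, ← MulAut.mul_apply, ← map_mul, ← map_mul, inl_aut]
  simp [mul_assoc]

/-- The automorphism of `M ⋊ A` induced by `b : B`. -/
def sdAssocAut (ρ : SemidirectProduct A B φ' →* MulAut M) (b : B) :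
    SemidirectProduct M A (ρ.comp inl) ≃* SemidirectProduct M A (ρ.comp inl) where
  toFun p := ⟨ρ (inr b) p.left, φ' b p.right⟩
  invFun p := ⟨ρ (inr b⁻¹) p.left, φ' b⁻¹ p.right⟩
  left_inv p := by
    ext <;> simp [← MulAut.mul_apply, ← map_mul, ← MonoidHom.map_mul ρ]
  right_inv p := by
    ext <;> simp [← MulAut.mul_apply, ← map_mul, ← MonoidHom.map_mul ρ, -MulAut.coe_mul] <;> simp [MulAut.mul_apply]
  map_mul' p q := by
    ext
    · simp only [mul_left, MonoidHom.comp_apply, map_mul, sd_rho_key]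
    · simp [mul_right]

/-- The action of `B` on `M ⋊ A`. -/
def sdAssocHom (ρ : SemidirectProduct A B φ' →* MulAut M) :
    B →* MulAut (SemidirectProduct M A (ρ.comp inl)) where
  toFun := sdAssocAut φ' ρ
  map_one' := by
    refine MulEquiv.ext fun p => SemidirectProduct.ext ?_ ?_ <;> simp [sdAssocAut]
  map_mul' b c := by
    refine MulEquiv.ext fun p => SemidirectProduct.ext ?_ ?_ <;>
      simp [sdAssocAut, MulAut.mul_apply, map_mul]

lemma sdAssocHom_left (ρ : SemidirectProduct A B φ' →* MulAut M) (b : B)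
    (p : SemidirectProduct M A (ρ.comp inl)) :
    ((sdAssocHom φ' ρ b) p).left = ρ (inr b) p.left := rfl

lemma sdAssocHom_right (ρ : SemidirectProduct A B φ' →* MulAut M) (b : B)
    (p : SemidirectProduct M A (ρ.comp inl)) :
    ((sdAssocHom φ' ρ b) p).right = φ' b p.right := rfl

/-- Associativity of semidirect products. -/
def sdAssoc (ρ : SemidirectProduct A B φ' →* MulAut M) :
    SemidirectProduct M (SemidirectProduct A B φ') ρ ≃*
      SemidirectProduct (SemidirectProduct M A (ρ.comp inl)) B (sdAssocHom φ' ρ) where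
  toFun p := ⟨⟨p.left, p.right.left⟩, p.right.right⟩
  invFun p := ⟨p.left.left, ⟨p.left.right, p.right⟩⟩
  left_inv p := by ext <;> simp
  right_inv p := by ext <;> simp
  map_mul' p q := by
    have hd : ∀ r : SemidirectProduct A B φ', r = inl r.left * inr r.right :=
      fun r => (inl_left_mul_inr_right r).symm
    ext
    · simp only [mul_left, mul_right, sdAssocHom_left, sdAssocHom_right, MonoidHom.comp_apply]
      rw [congrArg ρ (hd p.right), map_mul, MulAut.mul_apply]
    · simp [mul_left, mul_right, sdAssocHom_left, sdAssocHom_right]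
    · simp [mul_left, mul_right, sdAssocHom_right]
end SdGeneral

section Stage1

open Monoid SemidirectProduct

variable (d : ℕ)

abbrev Cd := Multiplicative (ZMod d)

/-- The `j`-th generator of the free group, or `1` out of range. -/
def ofn (j : ℕ) : Fr d := if h : j < d - 1 then FreeGroup.of ⟨j, h⟩ else 1

/-- The product of all generators. -/
def Wf : Fr d := ((List.range (d - 1)).map (ofn d)).prod

/-- The family `x_i`, `i ∈ ZMod d`, of elements of the free group. -/
def X (i : ZMod d) : Fr d := if i.val < d - 1 then ofn d i.val else (Wf d)⁻¹

/-- Partial products of the `x_i`. -/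
def Z (k : ℕ) : Fr d := ((List.range k).map (fun j => X d ((j : ℕ) : ZMod d))).prod

variable {d}

lemma X_nat (hd : 3 ≤ d) {j : ℕ} (h : j < d - 1) :
    X d ((j : ℕ) : ZMod d) = ofn d j := by
  have hval : (((j : ℕ) : ZMod d)).val = j := ZMod.val_cast_of_lt (by omega)
  rw [X, hval, if_pos h]

lemma X_fin (hd : 3 ≤ d) (j : Fin (d - 1)) :
    X d ((j : ℕ) : ZMod d) = FreeGroup.of j := by
  rw [X_nat hd j.2, ofn, dif_pos j.2]

lemma X_last (hd : 3 ≤ d) : X d (((d - 1 : ℕ) : ZMod d)) = (Wf d)⁻¹ := by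
  have hval : (((d - 1 : ℕ) : ZMod d)).val = d - 1 := ZMod.val_cast_of_lt (by omega)
  rw [X, hval, if_neg (by omega)]

lemma cast_pred (hd : 3 ≤ d) : ((d - 1 : ℕ) : ZMod d) = -1 := by
  have h1 : ((d : ℕ) : ZMod d) = 0 := ZMod.natCast_self d
  have : ((d - 1 : ℕ) : ZMod d) = ((d : ℕ) : ZMod d) - 1 := by
    rw [Nat.cast_sub (by omega), Nat.cast_one]
  rw [this, h1]; ring

lemma Z_succ (k : ℕ) : Z d (k + 1) = Z d k * X d ((k : ℕ) : ZMod d) := by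
  rw [Z, List.range_succ, List.map_append, List.prod_append]; simp [Z]

lemma Z_eq_W (hd : 3 ≤ d) : Z d (d - 1) = Wf d := by
  rw [Z, Wf]
  congr 1
  refine List.map_congr_left fun j hj => ?_
  rw [List.mem_range] at hj
  exact X_nat hd hj

lemma Z_d (hd : 3 ≤ d) : Z d d = 1 := by
  have h : d = (d - 1) + 1 := by omega
  rw [h, Z_succ, ← h, Z_eq_W hd, X_last hd, mul_inv_cancel]

variable (d) in
/-- The endomorphism sending `x_i` to `x_{i+1}`. -/
def alphaHom : Fr d →* Fr d :=
  FreeGroup.lift (fun j : Fin (d - 1) => X d (((j : ℕ) : ZMod d) + 1))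

variable (d) in
/-- The endomorphism sending `x_i` to `x_{i-1}`. -/
def alphaHom' : Fr d →* Fr d :=
  FreeGroup.lift (fun j : Fin (d - 1) => X d (((j : ℕ) : ZMod d) - 1))

lemma alpha_W (hd : 3 ≤ d) : alphaHom d (Wf d) = (ofn d 0)⁻¹ := by
  have key : Z d d = X d ((0 : ℕ) : ZMod d) * alphaHom d (Wf d) := by
    rw [Z]
    rw [show List.range d = 0 :: List.map Nat.succ (List.range (d - 1)) by
      rw [← List.range_succ_eq_map]; congr 1; omega]
    rw [List.map_cons, List.prod_cons, List.map_map]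
    congr 1
    rw [Wf, map_list_prod, List.map_map]
    refine congrArg List.prod (List.map_congr_left fun j hj => ?_)
    rw [List.mem_range] at hj
    simp only [Function.comp_apply]
    rw [ofn, dif_pos hj, alphaHom, FreeGroup.lift_apply_of]
    congr 1
    push_cast [Nat.succ_eq_add_one]
    ring
  have h0 : X d ((0 : ℕ) : ZMod d) = ofn d 0 := X_nat hd (by omega)
  rw [Z_d hd, h0] at key
  rw [← one_mul (alphaHom d (Wf d)), ← inv_mul_cancel (ofn d 0), mul_assoc, ← key, mul_one]

lemma alpha_X (hd : 3 ≤ d) (i : ZMod d) : alphaHom d (X d i) = X d (i + 1) := by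
  haveI : NeZero d := ⟨by omega⟩
  by_cases h : i.val < d - 1
  · rw [X, if_pos h, ofn, dif_pos h, alphaHom, FreeGroup.lift_apply_of]
    congr 1
    rw [ZMod.natCast_val, ZMod.cast_id]
  · have hv : i.val = d - 1 := by have := ZMod.val_lt i; omega
    have hi : i = ((d - 1 : ℕ) : ZMod d) := by
      conv_lhs => rw [← ZMod.natCast_rightInverse i]
      rw [hv]
    rw [X, if_neg h, map_inv, alpha_W hd, inv_inv, hi, cast_pred hd]
    have h0 : X d ((0 : ℕ) : ZMod d) = ofn d 0 := X_nat hd (by omega)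
    simp only [neg_add_cancel]
    rw [← h0]; norm_num

lemma alpha'_W (hd : 3 ≤ d) : alphaHom' d (Wf d) = (ofn d (d - 2))⁻¹ := by
  have key : alphaHom' d (Wf d) = X d (-1) * Z d (d - 2) := by
    rw [Wf, map_list_prod, List.map_map]
    rw [show List.range (d - 1) = 0 :: List.map Nat.succ (List.range (d - 2)) by
      rw [← List.range_succ_eq_map]; congr 1; omega]
    rw [List.map_cons, List.prod_cons, List.map_map]
    have h0 : (alphaHom' d ∘ ofn d) 0 = X d (-1) := by
      simp only [Function.comp_apply]
      rw [ofn, dif_pos (by omega), alphaHom', FreeGroup.lift_apply_of]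
      norm_num
    rw [h0]
    congr 1
    rw [Z]
    refine congrArg List.prod (List.map_congr_left fun j hj => ?_)
    rw [List.mem_range] at hj
    simp only [Function.comp_apply]
    rw [ofn, dif_pos (by omega), alphaHom', FreeGroup.lift_apply_of]
    congr 1
    push_cast [Nat.succ_eq_add_one]
    ring
  have hW : Wf d = Z d (d - 2) * X d (((d - 2 : ℕ)) : ZMod d) := by
    rw [← Z_succ, ← Z_eq_W hd]
    congr 1
    omega
  have hm1 : ((d - 1 : ℕ) : ZMod d) = -1 := cast_pred hd
  rw [key, ← hm1, X_last hd, hW, mul_inv_rev, mul_assoc, inv_mul_cancel, mul_one,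
    X_nat hd (by omega)]

lemma cast_sub2 (hd : 3 ≤ d) : ((d - 2 : ℕ) : ZMod d) = -1 - 1 := by
  have : ((d - 2 : ℕ) : ZMod d) = ((d : ℕ) : ZMod d) - 2 := by
    rw [Nat.cast_sub (by omega)]; norm_num
  rw [this, ZMod.natCast_self]; ring

lemma alpha'_X (hd : 3 ≤ d) (i : ZMod d) : alphaHom' d (X d i) = X d (i - 1) := by
  haveI : NeZero d := ⟨by omega⟩
  by_cases h : i.val < d - 1
  · rw [X, if_pos h, ofn, dif_pos h, alphaHom', FreeGroup.lift_apply_of]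
    congr 1
    rw [ZMod.natCast_val, ZMod.cast_id]
  · have hv : i.val = d - 1 := by have := ZMod.val_lt i; omega
    have hi : i = ((d - 1 : ℕ) : ZMod d) := by
      conv_lhs => rw [← ZMod.natCast_rightInverse i]
      rw [hv]
    rw [X, if_neg h, map_inv, alpha'_W hd, inv_inv, hi, cast_pred hd]
    rw [← X_nat hd (j := d - 2) (by omega), cast_sub2 hd]

variable (d) in
/-- The automorphism `x_i ↦ x_{i+1}` of the free group. -/
def alphaE (hd : 3 ≤ d) : MulAut (Fr d) :=
  MonoidHom.toMulEquiv (alphaHom d) (alphaHom' d)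
    (by
      apply FreeGroup.ext_hom
      intro j
      simp only [MonoidHom.comp_apply, MonoidHom.id_apply]
      rw [← X_fin hd j, alpha_X hd, alpha'_X hd, add_sub_cancel_right])
    (by
      apply FreeGroup.ext_hom
      intro j
      simp only [MonoidHom.comp_apply, MonoidHom.id_apply]
      rw [← X_fin hd j, alpha'_X hd, alpha_X hd, sub_add_cancel])

lemma alphaE_apply (hd : 3 ≤ d) (x : Fr d) : alphaE d hd x = alphaHom d x := rfl

lemma alphaE_pow (hd : 3 ≤ d) (k : ℕ) (i : ZMod d) :
    (alphaE d hd ^ k) (X d i) = X d (i + (k : ZMod d)) := by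
  induction k with
  | zero => simp
  | succ k ih =>
    rw [pow_succ', MulAut.mul_apply, ih, alphaE_apply, alpha_X hd]
    congr 1
    push_cast
    ring

lemma alphaE_pow_d (hd : 3 ≤ d) : alphaE d hd ^ d = 1 := by
  have h : ∀ j : Fin (d - 1),
      (alphaE d hd ^ d) (FreeGroup.of j) = FreeGroup.of j := by
    intro j
    rw [← X_fin hd j, alphaE_pow hd, ZMod.natCast_self, add_zero]
  refine MulEquiv.ext fun x => ?_
  have key := FreeGroup.ext_hom (α := Fin (d - 1)) (M := Fr d)
    ((alphaE d hd ^ d : MulAut (Fr d)) : Fr d →* Fr d) (MonoidHom.id (Fr d))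
    (fun j => by simpa using h j)
  have := DFunLike.congr_fun key x
  simpa using this

variable (d) in
/-- A homomorphism out of `C_d` determined by an element of order dividing `d`. -/
def cdPowHom {G : Type*} [Monoid G] (hd : 3 ≤ d) (g : G) (hg : g ^ d = 1) :
    Cd d →* G where
  toFun c := g ^ (Multiplicative.toAdd c).val
  map_one' := by
    haveI : NeZero d := ⟨by omega⟩
    simp [ZMod.val_zero]
  map_mul' x y := by
    haveI : NeZero d := ⟨by omega⟩
    show g ^ (Multiplicative.toAdd x + Multiplicative.toAdd y).val = _
    rw [ZMod.val_add, ← pow_eq_pow_mod _ hg, pow_add]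

lemma cdPowHom_apply {G : Type*} [Monoid G] (hd : 3 ≤ d) (g : G) (hg : g ^ d = 1)
    (m : ZMod d) : cdPowHom d hd g hg (Multiplicative.ofAdd m) = g ^ m.val := rfl

lemma cdPowHom_ofAdd_one {G : Type*} [Monoid G] (hd : 3 ≤ d) (g : G) (hg : g ^ d = 1) :
    cdPowHom d hd g hg (Multiplicative.ofAdd 1) = g := by
  haveI : Fact (1 < d) := ⟨by omega⟩
  rw [cdPowHom_apply, ZMod.val_one, pow_one]

/-- Homomorphisms out of `C_d` are determined by the image of `1`. -/
lemma cd_hom_ext (hd : 3 ≤ d) {G : Type*} [Monoid G] {f g : Cd d →* G}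
    (h : f (Multiplicative.ofAdd 1) = g (Multiplicative.ofAdd 1)) : f = g := by
  haveI : NeZero d := ⟨by omega⟩
  refine MonoidHom.ext fun x => ?_
  have hx : x = (Multiplicative.ofAdd (1 : ZMod d)) ^ ZMod.val (Multiplicative.toAdd x) := by
    rw [← ofAdd_nsmul, nsmul_eq_mul, mul_one]
    show x = Multiplicative.ofAdd _
    rw [ZMod.natCast_rightInverse (Multiplicative.toAdd x)]
    rfl
  rw [hx, map_pow, map_pow, h]

variable (d) in
/-- The action of `C_d` on the free group of rank `d - 1`. -/
def psi0 (hd : 3 ≤ d) : Cd d →* MulAut (Fr d) :=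
  cdPowHom d hd (alphaE d hd) (alphaE_pow_d hd)

lemma psi0_apply (hd : 3 ≤ d) (m : ZMod d) :
    psi0 d hd (Multiplicative.ofAdd m) = alphaE d hd ^ m.val := rfl

lemma psi0_X (hd : 3 ≤ d) (m : ZMod d) (i : ZMod d) :
    psi0 d hd (Multiplicative.ofAdd m) (X d i) = X d (i + m) := by
  haveI : NeZero d := ⟨by omega⟩
  rw [psi0_apply, alphaE_pow hd]
  congr 1
  congr 1
  exact ZMod.natCast_rightInverse m

end Stage1

section Stage1Q

open Monoid SemidirectProduct

variable (d : ℕ)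

/-- Powers of the left generator of `C_d ∗ C_d`. -/
def qa (c : ZMod d) : Q d := Monoid.Coprod.inl (Multiplicative.ofAdd c)

/-- Powers of the right generator of `C_d ∗ C_d`. -/
def qb (c : ZMod d) : Q d := Monoid.Coprod.inr (Multiplicative.ofAdd c)

variable {d}

lemma qa_mul (x y : ZMod d) : qa d x * qa d y = qa d (x + y) := by
  rw [qa, qa, qa, ← map_mul]; rfl

lemma qb_mul (x y : ZMod d) : qb d x * qb d y = qb d (x + y) := by
  rw [qb, qb, qb, ← map_mul]; rfl

lemma qa_zero : qa d 0 = 1 := by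
  rw [qa]; norm_num

lemma qb_zero : qb d 0 = 1 := by
  rw [qb]; norm_num

lemma qa_inv (x : ZMod d) : (qa d x)⁻¹ = qa d (-x) := by
  rw [eq_comm, eq_inv_iff_mul_eq_one, qa_mul, neg_add_cancel, qa_zero]

lemma qb_inv (x : ZMod d) : (qb d x)⁻¹ = qb d (-x) := by
  rw [eq_comm, eq_inv_iff_mul_eq_one, qb_mul, neg_add_cancel, qb_zero]

variable (d)

/-- The elements `x_i = a^i b a^{-(i+1)}` of `C_d ∗ C_d`. -/
def qx (i : ZMod d) : Q d := qa d i * qb d 1 * qa d (-(i + 1))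

variable {d}

lemma qx_conj (m i : ZMod d) : qa d m * qx d i * qa d (-m) = qx d (i + m) := by
  rw [qx, qx]
  have h1 : qa d m * (qa d i * qb d 1 * qa d (-(i + 1))) * qa d (-m)
      = (qa d m * qa d i) * qb d 1 * (qa d (-(i + 1)) * qa d (-m)) := by
    group
  rw [h1, qa_mul, qa_mul]
  have e1 : m + i = i + m := add_comm m i
  have e2 : -(i + 1) + -m = -(i + m + 1) := by ring
  rw [e1, e2]

lemma prod_qx (k : ℕ) :
    ((List.range k).map (fun j => qx d ((j : ℕ) : ZMod d))).prod
      = qb d (k : ZMod d) * qa d (-(k : ZMod d)) := by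
  induction k with
  | zero => simp [qb_zero, qa_zero]
  | succ k ih =>
    rw [List.range_succ, List.map_append, List.prod_append, ih]
    simp only [List.map_cons, List.map_nil, List.prod_cons, List.prod_nil, mul_one]
    rw [qx]
    have h1 : qb d (k : ZMod d) * qa d (-(k : ZMod d)) *
        (qa d ((k : ℕ) : ZMod d) * qb d 1 * qa d (-(((k : ℕ) : ZMod d) + 1)))
        = qb d (k : ZMod d) * (qa d (-(k : ZMod d)) * qa d ((k : ℕ) : ZMod d)) *
          qb d 1 * qa d (-(((k : ℕ) : ZMod d) + 1)) := by
      group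
    rw [h1, qa_mul, neg_add_cancel, qa_zero, mul_one, qb_mul]
    congr 2 <;> push_cast <;> ring

end Stage1Q


section Stage1T

open Monoid SemidirectProduct

variable {d : ℕ}

variable (d) in
/-- The model semidirect product `F_{d-1} ⋊ C_d`. -/
abbrev Pg (hd : 3 ≤ d) := SemidirectProduct (Fr d) (Cd d) (psi0 d hd)

variable (d) in
/-- The image of the right generator `b`. -/
def sElem (hd : 3 ≤ d) : Pg d hd := ⟨X d 0, Multiplicative.ofAdd 1⟩

lemma sElem_eq (hd : 3 ≤ d) :
    sElem d hd = inl (X d 0) * inr (Multiplicative.ofAdd (1 : ZMod d)) := by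
  ext <;> simp [sElem, mul_left, mul_right]

lemma sElem_pow (hd : 3 ≤ d) (k : ℕ) :
    sElem d hd ^ k = ⟨Z d k, Multiplicative.ofAdd ((k : ℕ) : ZMod d)⟩ := by
  induction k with
  | zero =>
    ext
    · show (1 : Fr d) = Z d 0
      simp [Z]
    · show (1 : Cd d) = Multiplicative.ofAdd ((0 : ℕ) : ZMod d)
      norm_num
  | succ k ih =>
    rw [pow_succ, ih]
    ext
    · show Z d k * psi0 d hd (Multiplicative.ofAdd ((k : ℕ) : ZMod d)) (X d 0) = Z d (k + 1)
      rw [psi0_X hd, zero_add, ← Z_succ]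
    · show Multiplicative.ofAdd ((k : ℕ) : ZMod d) * Multiplicative.ofAdd 1
          = Multiplicative.ofAdd (((k + 1 : ℕ)) : ZMod d)
      rw [← ofAdd_add]
      congr 1
      push_cast
      ring

lemma sElem_pow_d (hd : 3 ≤ d) : sElem d hd ^ d = 1 := by
  rw [sElem_pow hd, Z_d hd]
  ext
  · rfl
  · show Multiplicative.ofAdd ((d : ℕ) : ZMod d) = 1
    rw [ZMod.natCast_self]
    rfl

variable (d) in
/-- The hom `C_d → F_{d-1} ⋊ C_d` sending the generator to `sElem`. -/
def f2 (hd : 3 ≤ d) : Cd d →* Pg d hd := cdPowHom d hd (sElem d hd) (sElem_pow_d hd)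

variable (d) in
/-- The hom `C_d ∗ C_d → F_{d-1} ⋊ C_d`. -/
def theta (hd : 3 ≤ d) : Q d →* Pg d hd := Monoid.Coprod.lift SemidirectProduct.inr (f2 d hd)

lemma theta_inl (hd : 3 ≤ d) (c : Cd d) :
    theta d hd (Monoid.Coprod.inl c) = inr c := by
  rw [theta, Monoid.Coprod.lift_apply_inl]

lemma theta_qa (hd : 3 ≤ d) (m : ZMod d) :
    theta d hd (qa d m) = inr (Multiplicative.ofAdd m) := theta_inl hd _

lemma theta_qb_one (hd : 3 ≤ d) : theta d hd (qb d 1) = sElem d hd := by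
  rw [qb, theta, Monoid.Coprod.lift_apply_inr]
  exact cdPowHom_ofAdd_one hd _ _

variable (d) in
/-- The embedding `F_{d-1} → C_d ∗ C_d` sending generators to the `x_i`. -/
def phiOne : Fr d →* Q d := FreeGroup.lift (fun j : Fin (d - 1) => qx d ((j : ℕ) : ZMod d))

lemma phiOne_of (j : Fin (d - 1)) : phiOne d (FreeGroup.of j) = qx d ((j : ℕ) : ZMod d) :=
  FreeGroup.lift_apply_of

lemma phiOne_W (hd : 3 ≤ d) : phiOne d (Wf d) = qb d (-1) * qa d 1 := by
  rw [Wf, map_list_prod, List.map_map]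
  have h : List.map (⇑(phiOne d) ∘ ofn d) (List.range (d - 1))
      = List.map (fun j : ℕ => qx d ((j : ℕ) : ZMod d)) (List.range (d - 1)) := by
    refine List.map_congr_left fun j hj => ?_
    rw [List.mem_range] at hj
    simp only [Function.comp_apply]
    rw [ofn, dif_pos hj, phiOne, FreeGroup.lift_apply_of]
  rw [h, prod_qx, cast_pred hd, neg_neg]

lemma phiOne_X (hd : 3 ≤ d) (i : ZMod d) : phiOne d (X d i) = qx d i := by
  haveI : NeZero d := ⟨by omega⟩
  by_cases h : i.val < d - 1
  · rw [X, if_pos h, ofn, dif_pos h, phiOne, FreeGroup.lift_apply_of]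
    congr 1
    rw [ZMod.natCast_val, ZMod.cast_id]
  · have hv : i.val = d - 1 := by have := ZMod.val_lt i; omega
    have hi : i = ((d - 1 : ℕ) : ZMod d) := by
      conv_lhs => rw [← ZMod.natCast_rightInverse i]
      rw [hv]
    rw [X, if_neg h, map_inv, phiOne_W hd, hi, cast_pred hd]
    rw [mul_inv_rev, qa_inv, qb_inv, neg_neg, qx]
    norm_num [qa_zero]

lemma hcond (hd : 3 ≤ d) : ∀ c : Cd d,
    (phiOne d).comp (psi0 d hd c).toMonoidHom
      = (MulAut.conj (Monoid.Coprod.inl c)).toMonoidHom.comp (phiOne d) := by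
  intro c
  apply FreeGroup.ext_hom
  intro j
  simp only [MonoidHom.comp_apply, MulEquiv.coe_toMonoidHom, MulAut.conj_apply]
  have hc : c = Multiplicative.ofAdd (Multiplicative.toAdd c) := rfl
  rw [hc, ← X_fin hd j, psi0_X hd, phiOne_X hd, phiOne_X hd]
  show qx d _ = qa d _ * qx d _ * (qa d _)⁻¹
  rw [qa_inv, qx_conj]

variable (d) in
/-- The hom `F_{d-1} ⋊ C_d → C_d ∗ C_d`. -/
def theta' (hd : 3 ≤ d) : Pg d hd →* Q d :=
  SemidirectProduct.lift (phiOne d) Monoid.Coprod.inl (hcond hd)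

lemma theta'_inl (hd : 3 ≤ d) (x : Fr d) : theta' d hd (inl x) = phiOne d x := by
  rw [theta', SemidirectProduct.lift_inl]

lemma theta'_inr (hd : 3 ≤ d) (c : Cd d) :
    theta' d hd (inr c) = Monoid.Coprod.inl c := by
  rw [theta', SemidirectProduct.lift_inr]

lemma theta_qx (hd : 3 ≤ d) (i : ZMod d) : theta d hd (qx d i) = inl (X d i) := by
  rw [qx, map_mul, map_mul, theta_qa, theta_qa, theta_qb_one, sElem_eq]
  have haut : (inr (Multiplicative.ofAdd i) : Pg d hd) * inl (X d 0)
      = inl (psi0 d hd (Multiplicative.ofAdd i) (X d 0)) * inr (Multiplicative.ofAdd i) := by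
    rw [inl_aut, map_inv]
    group
  calc inr (Multiplicative.ofAdd i) * (inl (X d 0) * inr (Multiplicative.ofAdd 1)) *
        inr (Multiplicative.ofAdd (-(i + 1)))
      = (inr (Multiplicative.ofAdd i) * inl (X d 0)) *
          (inr (Multiplicative.ofAdd 1) * inr (Multiplicative.ofAdd (-(i + 1)))) := by group
    _ = inl (psi0 d hd (Multiplicative.ofAdd i) (X d 0)) *
          (inr (Multiplicative.ofAdd i) * (inr (Multiplicative.ofAdd 1) *
            inr (Multiplicative.ofAdd (-(i + 1))))) := by rw [haut]; group
    _ = inl (X d i) := by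
        rw [psi0_X hd, zero_add, ← map_mul, ← map_mul, ← ofAdd_add, ← ofAdd_add]
        have : i + (1 + -(i + 1)) = 0 := by ring
        rw [this]
        norm_num

lemma theta_theta' (hd : 3 ≤ d) :
    (theta d hd).comp (theta' d hd) = MonoidHom.id (Pg d hd) := by
  apply SemidirectProduct.hom_ext
  · apply FreeGroup.ext_hom
    intro j
    simp only [MonoidHom.comp_apply, MonoidHom.id_apply]
    rw [theta'_inl hd, phiOne_of, theta_qx hd, X_fin hd]
  · apply cd_hom_ext hd
    simp only [MonoidHom.comp_apply, MonoidHom.id_apply]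
    rw [theta'_inr hd, theta_inl hd]

lemma theta'_theta (hd : 3 ≤ d) :
    (theta' d hd).comp (theta d hd) = MonoidHom.id (Q d) := by
  apply Monoid.Coprod.hom_ext
  · apply cd_hom_ext hd
    simp only [MonoidHom.comp_apply, MonoidHom.id_apply]
    rw [theta_inl hd, theta'_inr hd]
  · apply cd_hom_ext hd
    simp only [MonoidHom.comp_apply, MonoidHom.id_apply]
    show theta' d hd (theta d hd (qb d 1)) = qb d 1
    rw [theta_qb_one hd, sElem_eq hd, map_mul, theta'_inl hd, theta'_inr hd, phiOne_X hd, qx]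
    show qa d 0 * qb d 1 * qa d (-(0 + 1)) * qa d 1 = qb d 1
    rw [qa_zero, one_mul, mul_assoc, qa_mul]
    norm_num [qa_zero]

variable (d) in
/-- The isomorphism `C_d ∗ C_d ≃ F_{d-1} ⋊ C_d`. -/
def thetaIso (hd : 3 ≤ d) : Q d ≃* Pg d hd :=
  MonoidHom.toMulEquiv (theta d hd) (theta' d hd) (theta'_theta hd) (theta_theta' hd)

lemma thetaIso_apply (hd : 3 ≤ d) (q : Q d) : thetaIso d hd q = theta d hd q := rfl

lemma thetaIso_symm_apply (hd : 3 ≤ d) (p : Pg d hd) :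
    (thetaIso d hd).symm p = theta' d hd p := rfl

end Stage1T


section Stage2

open Monoid SemidirectProduct

variable {d n : ℕ}

lemma theta_phiOne (hd : 3 ≤ d) (z : Fr d) :
    theta d hd (phiOne d z) = inl z := by
  have h := DFunLike.congr_fun (theta_theta' hd) (inl z : Pg d hd)
  simp only [MonoidHom.comp_apply, MonoidHom.id_apply] at h
  rw [theta'_inl hd] at h
  exact h

lemma theta'_theta_apply (hd : 3 ≤ d) (q : Q d) :
    theta' d hd (theta d hd q) = q := by
  have h := DFunLike.congr_fun (theta'_theta hd) q
  simpa using h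

variable (d) in
/-- The composite `C_d ∗ C_d → C_d` (the fold map). -/
def rh (hd : 3 ≤ d) : Q d →* Cd d := SemidirectProduct.rightHom.comp (theta d hd)

lemma rh_coprod_inl (hd : 3 ≤ d) (c : Cd d) : rh d hd (Monoid.Coprod.inl c) = c := by
  rw [rh, MonoidHom.comp_apply, theta_inl hd, rightHom_inr]

lemma rh_coprod_inr (hd : 3 ≤ d) (c : Cd d) : rh d hd (Monoid.Coprod.inr c) = c := by
  have h : (rh d hd).comp (Monoid.Coprod.inr : Cd d →* Q d) = MonoidHom.id (Cd d) := by
    apply cd_hom_ext hd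
    show rh d hd (qb d 1) = Multiplicative.ofAdd 1
    rw [rh, MonoidHom.comp_apply, theta_qb_one hd]
    rfl
  exact DFunLike.congr_fun h c

lemma rh_phiOne (hd : 3 ≤ d) (z : Fr d) : rh d hd (phiOne d z) = 1 := by
  rw [rh, MonoidHom.comp_apply, theta_phiOne hd, rightHom_inl]

lemma phiOne_injective (hd : 3 ≤ d) : Function.Injective (phiOne d) := by
  intro z z' h
  have := congrArg (theta d hd) h
  rw [theta_phiOne hd, theta_phiOne hd] at this
  exact inl_injective this

/-- Decomposition of an element of `Q` modulo a free factor. -/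
lemma exists_phiOne_mul (hd : 3 ≤ d) (q : Q d) (ι : Cd d →* Q d)
    (hι : ∀ c, rh d hd (ι c) = c) :
    ∃ z : Fr d, q = phiOne d z * ι (rh d hd q) := by
  set c := rh d hd q with hc
  set q' := q * ι c⁻¹ with hq'
  have hr : (theta d hd q').right = 1 := by
    have h1 : rh d hd q' = 1 := by rw [hq', map_mul, hι, ← hc, mul_inv_cancel]
    exact h1
  refine ⟨(theta d hd q').left, ?_⟩
  have h2 : theta d hd q' = inl ((theta d hd q').left) := by
    conv_lhs => rw [← inl_left_mul_inr_right (theta d hd q')]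
    rw [show (theta d hd q').right = 1 from hr]
    simp
  have h3 : q' = phiOne d ((theta d hd q').left) := by
    have := congrArg (theta' d hd) h2
    rwa [theta'_theta_apply hd, theta'_inl hd] at this
  rw [← h3, hq']
  rw [mul_assoc, ← map_mul]
  simp

end Stage2


section Stage3

open Monoid SemidirectProduct

variable {d n : ℕ}

variable (d) in
/-- The bijection `F_{d-1} ≃ Q/Lf`. -/
noncomputable def betaL (hd : 3 ≤ d) : Fr d ≃ (Q d ⧸ Lf d) :=
  Equiv.ofBijective (fun y => QuotientGroup.mk (phiOne d y)) (by
    constructor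
    · intro y y' h
      rw [QuotientGroup.eq] at h
      obtain ⟨c, hc⟩ := h
      have h2 : phiOne d (y⁻¹ * y') = Monoid.Coprod.inl c := by
        rw [map_mul, map_inv, hc]
      have h3 : c = 1 := by
        have := congrArg (rh d hd) h2
        rwa [rh_phiOne hd, rh_coprod_inl hd, eq_comm] at this
      have h4 : y⁻¹ * y' = 1 := by
        apply phiOne_injective hd
        rw [h2, h3, map_one, map_one]
      exact inv_mul_eq_one.mp h4
    · intro v
      induction v using QuotientGroup.induction_on with
      | H q =>
        obtain ⟨z, hz⟩ := exists_phiOne_mul hd q Monoid.Coprod.inl (rh_coprod_inl hd)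
        refine ⟨z, ?_⟩
        show QuotientGroup.mk (phiOne d z) = _
        rw [hz, QuotientGroup.mk_mul_of_mem _ (MonoidHom.mem_range.mpr ⟨rh d hd q, rfl⟩)])

variable (d) in
/-- The bijection `F_{d-1} ≃ Q/Rf`. -/
noncomputable def betaR (hd : 3 ≤ d) : Fr d ≃ (Q d ⧸ Rf d) :=
  Equiv.ofBijective (fun y => QuotientGroup.mk (phiOne d y)) (by
    constructor
    · intro y y' h
      rw [QuotientGroup.eq] at h
      obtain ⟨c, hc⟩ := h
      have h2 : phiOne d (y⁻¹ * y') = Monoid.Coprod.inr c := by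
        rw [map_mul, map_inv, hc]
      have h3 : c = 1 := by
        have := congrArg (rh d hd) h2
        rwa [rh_phiOne hd, rh_coprod_inr hd, eq_comm] at this
      have h4 : y⁻¹ * y' = 1 := by
        apply phiOne_injective hd
        rw [h2, h3, map_one, map_one]
      exact inv_mul_eq_one.mp h4
    · intro v
      induction v using QuotientGroup.induction_on with
      | H q =>
        obtain ⟨z, hz⟩ := exists_phiOne_mul hd q Monoid.Coprod.inr (rh_coprod_inr hd)
        refine ⟨z, ?_⟩
        show QuotientGroup.mk (phiOne d z) = _
        rw [hz, QuotientGroup.mk_mul_of_mem _ (MonoidHom.mem_range.mpr ⟨rh d hd q, rfl⟩)])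

lemma betaL_apply (hd : 3 ≤ d) (y : Fr d) :
    betaL d hd y = QuotientGroup.mk (phiOne d y) := rfl

lemma betaR_apply (hd : 3 ≤ d) (y : Fr d) :
    betaR d hd y = QuotientGroup.mk (phiOne d y) := rfl

lemma betaL_smul (hd : 3 ≤ d) (x y : Fr d) :
    betaL d hd (x * y) = phiOne d x • betaL d hd y := by
  rw [betaL_apply, betaL_apply, map_mul]
  rw [← smul_eq_mul, MulAction.Quotient.smul_mk]

lemma betaR_smul (hd : 3 ≤ d) (x y : Fr d) :
    betaR d hd (x * y) = phiOne d x • betaR d hd y := by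
  rw [betaR_apply, betaR_apply, map_mul]
  rw [← smul_eq_mul, MulAction.Quotient.smul_mk]

/-- Combining two finsupps into a product-valued finsupp. -/
noncomputable def pairAdd {α : Type*} {M N : Type*} [AddCommMonoid M] [AddCommMonoid N] :
    ((α →₀ M) × (α →₀ N)) ≃+ (α →₀ M × N) where
  toFun p := Finsupp.zipWith Prod.mk rfl p.1 p.2
  invFun f := (f.mapRange Prod.fst rfl, f.mapRange Prod.snd rfl)
  left_inv p := by
    ext a <;> simp [Finsupp.zipWith_apply, Finsupp.mapRange_apply]
  right_inv f := by
    ext a <;> simp [Finsupp.zipWith_apply, Finsupp.mapRange_apply]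
  map_add' p q := by
    ext a <;> simp [Finsupp.zipWith_apply]

lemma pairAdd_apply {α M N : Type*} [AddCommMonoid M] [AddCommMonoid N]
    (p : (α →₀ M) × (α →₀ N)) (a : α) : pairAdd p a = (p.1 a, p.2 a) := rfl

variable (d n) in
/-- The additive equivalence between the two base groups. -/
noncomputable def eAdd (hd : 3 ≤ d) : (Vd d →₀ ZMod n) ≃+ (Fr d →₀ ZMod n × ZMod n) :=
  (Finsupp.domCongr (Equiv.sumCongr (betaL d hd) (betaR d hd)).symm).trans
    (Finsupp.sumFinsuppAddEquivProdFinsupp.trans pairAdd)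

lemma eAdd_apply (hd : 3 ≤ d) (f : Vd d →₀ ZMod n) (y : Fr d) :
    eAdd d n hd f y = (f (Sum.inl (betaL d hd y)), f (Sum.inr (betaR d hd y))) := by
  show pairAdd (Finsupp.sumFinsuppAddEquivProdFinsupp
      (Finsupp.domCongr (Equiv.sumCongr (betaL d hd) (betaR d hd)).symm f)) y = _
  rw [pairAdd_apply, Finsupp.fst_sumFinsuppAddEquivProdFinsupp,
    Finsupp.snd_sumFinsuppAddEquivProdFinsupp]
  show (Finsupp.equivMapDomain _ f _, Finsupp.equivMapDomain _ f _) = _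
  rw [Finsupp.equivMapDomain_apply, Finsupp.equivMapDomain_apply]
  simp

lemma eAdd_equivariant (hd : 3 ≤ d) (x : Fr d) (f : Vd d →₀ ZMod n) :
    eAdd d n hd (Finsupp.domCongr (qperm d (phiOne d x)) f)
      = Finsupp.domCongr (Equiv.mulLeft x) (eAdd d n hd f) := by
  refine Finsupp.ext fun y => ?_
  rw [eAdd_apply]
  show _ = Finsupp.equivMapDomain (Equiv.mulLeft x) (eAdd d n hd f) y
  rw [Finsupp.equivMapDomain_apply]
  have hy : (Equiv.mulLeft x).symm y = x⁻¹ * y := by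
    rw [Equiv.mulLeft_symm]
    rfl
  rw [hy, eAdd_apply]
  show (Finsupp.equivMapDomain (qperm d (phiOne d x)) f _,
      Finsupp.equivMapDomain (qperm d (phiOne d x)) f _) = _
  rw [Finsupp.equivMapDomain_apply, Finsupp.equivMapDomain_apply]
  have hL : (qperm d (phiOne d x)).symm (Sum.inl (betaL d hd y))
      = Sum.inl (betaL d hd (x⁻¹ * y)) := by
    show Sum.inl ((MulAction.toPerm (phiOne d x)).symm (betaL d hd y)) = _
    congr 1
    show (phiOne d x)⁻¹ • betaL d hd y = betaL d hd (x⁻¹ * y)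
    rw [betaL_smul hd, map_inv]
  have hR : (qperm d (phiOne d x)).symm (Sum.inr (betaR d hd y))
      = Sum.inr (betaR d hd (x⁻¹ * y)) := by
    show Sum.inr ((MulAction.toPerm (phiOne d x)).symm (betaR d hd y)) = _
    congr 1
    show (phiOne d x)⁻¹ • betaR d hd y = betaR d hd (x⁻¹ * y)
    rw [betaR_smul hd, map_inv]
  rw [hL, hR]

end Stage3


section Final

open Monoid SemidirectProduct

variable (d n : ℕ)

/-- The action of the model group on the base of `W1`, transported along `thetaIso`. -/
noncomputable def rho (hd : 3 ≤ d) : Pg d hd →* MulAut (M1 d n) :=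
  (phi1 d n).comp (thetaIso d hd).symm.toMonoidHom

lemma rho_inl (hd : 3 ≤ d) (x : Fr d) :
    rho d n hd (inl x) = phi1 d n (phiOne d x) := by
  rw [rho, MonoidHom.comp_apply]
  congr 1
  show (thetaIso d hd).symm (inl x) = phiOne d x
  rw [thetaIso_symm_apply, theta'_inl hd]

/-- The multiplicative version of `eAdd`. -/
noncomputable def eMul (hd : 3 ≤ d) : M1 d n ≃* M2 d n :=
  AddEquiv.toMultiplicative (eAdd d n hd)

lemma eMul_equivariant (hd : 3 ≤ d) (x : Fr d) (m : M1 d n) :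
    eMul d n hd (((rho d n hd).comp inl) x m) = phi2 d n x (eMul d n hd m) := by
  have h := eAdd_equivariant (n := n) hd x (Multiplicative.toAdd m)
  rw [MonoidHom.comp_apply, rho_inl]
  exact h

/-- The isomorphism on the inner semidirect products. -/
noncomputable def etaIso (hd : 3 ≤ d) :
    SemidirectProduct (M1 d n) (Fr d) ((rho d n hd).comp inl) ≃* W2 d n :=
  sdCongrLeft ((rho d n hd).comp inl) (phi2 d n) (eMul d n hd) (eMul_equivariant d n hd)

/-- The action of `C_d` on `W2` transported along `etaIso`. -/
noncomputable def psiFinal (hd : 3 ≤ d) : Cd d →* MulAut (W2 d n) :=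
  (MulAut.congr (etaIso d n hd)).toMonoidHom.comp (sdAssocHom (psi0 d hd) (rho d n hd))

end Final

/-- The restricted wreath product `C_n ≀_{V_d} (C_d ∗ C_d)` (with
`V_d` the vertex set of the Bass–Serre tree of `C_d ∗ C_d`) is isomorphic to a
semidirect product `(C_n² ≀ F_{d-1}) ⋊ C_d`, where `F_{d-1}` is the free group of
rank `d - 1` and `C_n² ≀ F_{d-1}` is the restricted wreath product
`(⊕_{F_{d-1}} C_n²) ⋊ F_{d-1}`. -/
theorem wreath_product_decomposition (hd : 3 ≤ d) (hn : 2 ≤ n) :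
    ∃ ψ : Multiplicative (ZMod d) →* MulAut (W2 d n),
      Nonempty (W1 d n ≃* SemidirectProduct (W2 d n) (Multiplicative (ZMod d)) ψ) := by
  refine ⟨psiFinal d n hd, ⟨?_⟩⟩
  refine (sdCongrRight (phi1 d n) (thetaIso d hd)).trans
    ((sdAssoc (psi0 d hd) (rho d n hd)).trans ?_)
  exact sdCongrLeft _ (psiFinal d n hd) (etaIso d n hd) (fun c m => by
    show etaIso d n hd (sdAssocHom (psi0 d hd) (rho d n hd) c m)
        = (MulAut.congr (etaIso d n hd)) ((sdAssocHom (psi0 d hd) (rho d n hd)) c)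
            (etaIso d n hd m)
    simp [MulAut.congr])

end WreathIso
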